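/- Let M = λX + Z where X is symmetric with top eigenvalue μ_0 attained at unit eigenvector u_0, and suppose X has eigenvalues μ_0 ≥ μ_1 ≥ … with eigenspaces Y_0, Y_1, …. If v_0 is a unit-norm leading eigenvector of M and v_0 = v^{(m)} + v^⊥ is its orthogonal decomposition with v^{(m)} in the span of the top m+1 eigenspaces of X, then ‖v^⊥‖² ≤ 2‖Z‖_op / (λ(μ_0 − μ_{m+1})). -/
import Mathlib


open scoped RealInnerProductSpace

/-- Let `M = λX + Z` with `X, Z` symmetric, `X` having top eigenvalue `μ0` attained at the
unit eigenvector `u0`, `W` the span of the top `m+1` eigenspaces of `X` (an invariant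
subspace on whose orthogonal complement the Rayleigh quotient of `X` is at most `μ_{m+1}`).
If `v0` is a unit-norm leading eigenvector of `M`, decomposed as `v0 = v^{(m)} + v^⊥` with
`v^{(m)} ∈ W` and `v^⊥ ∈ Wᗮ`, then `‖v^⊥‖² ≤ 2‖Z‖_op/(λ(μ0 - μ_{m+1}))`. -/
theorem stmt7 {N : ℕ}
    (X Z : EuclideanSpace ℝ (Fin N) →L[ℝ] EuclideanSpace ℝ (Fin N))
    (hX : IsSelfAdjoint X) (hZ : IsSelfAdjoint Z)
    (lam μ0 μm1 : ℝ) (hlam : 0 < lam) (hgap : μm1 < μ0)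
    (W : Submodule ℝ (EuclideanSpace ℝ (Fin N)))
    (hWinv : ∀ w ∈ W, X w ∈ W)
    (hμ0 : ∀ w : EuclideanSpace ℝ (Fin N), ⟪w, X w⟫ ≤ μ0 * ‖w‖ ^ 2)
    (hμm1 : ∀ w ∈ Wᗮ, ⟪w, X w⟫ ≤ μm1 * ‖w‖ ^ 2)
    (u0 : EuclideanSpace ℝ (Fin N)) (hu0 : ‖u0‖ = 1) (hu0W : u0 ∈ W)
    (hXu0 : X u0 = μ0 • u0)
    (v0 vm vperp : EuclideanSpace ℝ (Fin N)) (hv0 : ‖v0‖ = 1)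
    (hvm : vm ∈ W) (hvperp : vperp ∈ Wᗮ) (hdec : v0 = vm + vperp)
    (β : ℝ) (hβ : (lam • X + Z) v0 = β • v0)
    (hlead : ∀ w : EuclideanSpace ℝ (Fin N), ⟪w, (lam • X + Z) w⟫ ≤ β * ‖w‖ ^ 2) :
    ‖vperp‖ ^ 2 ≤ 2 * ‖Z‖ / (lam * (μ0 - μm1)) := by
  have hsym : ∀ x y : EuclideanSpace ℝ (Fin N), ⟪X x, y⟫ = ⟪x, X y⟫ :=
    fun x y => hX.isSymmetric x y
  have hZbd : ∀ w : EuclideanSpace ℝ (Fin N), |⟪w, Z w⟫| ≤ ‖Z‖ * ‖w‖ ^ 2 := by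
    intro w
    calc |⟪w, Z w⟫| ≤ ‖w‖ * ‖Z w‖ := abs_real_inner_le_norm _ _
      _ ≤ ‖w‖ * (‖Z‖ * ‖w‖) := by
          exact mul_le_mul_of_nonneg_left (Z.le_opNorm w) (norm_nonneg w)
      _ = ‖Z‖ * ‖w‖ ^ 2 := by ring
  have ho : ⟪vm, vperp⟫ = 0 := hvperp vm hvm
  have hpyth : ‖vm‖ ^ 2 + ‖vperp‖ ^ 2 = 1 := by
    have := norm_add_sq_real vm vperp
    rw [ho] at this
    rw [← hdec] at this
    rw [hv0] at this
    nlinarith [this]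
  have hc1 : ⟪vperp, X vm⟫ = 0 := by
    rw [real_inner_comm]
    exact hvperp (X vm) (hWinv vm hvm)
  have hc2 : ⟪vm, X vperp⟫ = 0 := by
    rw [← hsym]
    exact hvperp (X vm) (hWinv vm hvm)
  have hsplit : ⟪v0, X v0⟫ = ⟪vm, X vm⟫ + ⟪vperp, X vperp⟫ := by
    rw [hdec, map_add]
    simp [inner_add_left, inner_add_right, hc1, hc2]
  have hXv0 : ⟪v0, X v0⟫ ≤ μ0 - (μ0 - μm1) * ‖vperp‖ ^ 2 := by
    have h1 : ⟪vm, X vm⟫ ≤ μ0 * ‖vm‖ ^ 2 := hμ0 vm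
    have h2 : ⟪vperp, X vperp⟫ ≤ μm1 * ‖vperp‖ ^ 2 := hμm1 vperp hvperp
    rw [hsplit]
    calc ⟪vm, X vm⟫ + ⟪vperp, X vperp⟫ ≤ μ0 * ‖vm‖ ^ 2 + μm1 * ‖vperp‖ ^ 2 := add_le_add h1 h2
      _ = μ0 - (μ0 - μm1) * ‖vperp‖ ^ 2 := by linear_combination μ0 * hpyth
  have hβv : β = lam * ⟪v0, X v0⟫ + ⟪v0, Z v0⟫ := by
    have h := congrArg (fun w => ⟪v0, w⟫) hβ
    simp only [ContinuousLinearMap.add_apply, ContinuousLinearMap.smul_apply,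
      inner_add_right, inner_smul_right, real_inner_smul_right,
      real_inner_self_eq_norm_sq, hv0] at h
    linarith [h]
  have hβu : lam * μ0 - ‖Z‖ ≤ β := by
    have h := hlead u0
    simp only [ContinuousLinearMap.add_apply, ContinuousLinearMap.smul_apply,
      inner_add_right, hXu0, real_inner_smul_right,
      real_inner_self_eq_norm_sq, hu0] at h
    have := abs_le.mp (hZbd u0)
    rw [hu0] at this
    nlinarith [this.1]
  have hkey : lam * (μ0 - μm1) * ‖vperp‖ ^ 2 ≤ 2 * ‖Z‖ := by
    have h2 := abs_le.mp (hZbd v0)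
    rw [hv0] at h2
    nlinarith [h2.2, hXv0]
  have hpos : 0 < lam * (μ0 - μm1) := mul_pos hlam (by linarith)
  rw [le_div_iff₀ hpos]
  nlinarith [hkey]
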